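/- arXiv:1604.08121 — 2 statements merged into one kernel-verified Lean document; each statement's English description precedes it below -/
import Mathlib

section
/- Let P_ℓ be the multilinear real polynomial representing majority on ℓ bits. For any real values a₁,...,a_ℓ ∈ ℝ (not necessarily Boolean), if more than ℓ/2 of the values a_i equal b ∈ {0,1}, then P_ℓ(a₁,...,a_ℓ) = b. -/
open scoped Classical

lemma affine_eval {n : ℕ} (P : MvPolynomial (Fin n) ℝ) (j : Fin n)
    (hj : P.degreeOf j ≤ 1) (a : Fin n → ℝ) (t : ℝ) :
    MvPolynomial.eval (Function.update a j t) P =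
      (1 - t) * MvPolynomial.eval (Function.update a j 0) P
        + t * MvPolynomial.eval (Function.update a j 1) P := by
  classical
  rw [MvPolynomial.eval_eq', MvPolynomial.eval_eq', MvPolynomial.eval_eq',
    Finset.mul_sum, Finset.mul_sum, ← Finset.sum_add_distrib]
  refine Finset.sum_congr rfl fun m hm => ?_
  have hmj : m j ≤ 1 := le_trans (MvPolynomial.monomial_le_degreeOf j hm) hj
  have key : ∀ s : ℝ, ∏ i, Function.update a j s i ^ m i
      = s ^ m j * ∏ i ∈ Finset.univ.erase j, a i ^ m i := by
    intro s
    rw [← Finset.mul_prod_erase Finset.univ _ (Finset.mem_univ j)]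
    congr 1
    · simp
    · exact Finset.prod_congr rfl fun i hi => by
        rw [Function.update_of_ne (Finset.ne_of_mem_erase hi)]
  rw [key, key, key]
  interval_cases h : m j <;> ring_nf

/-- If more than ℓ/2 of the (arbitrary real) inputs to the multilinear
majority polynomial equal `b ∈ {0,1}`, then the polynomial evaluates to `b`. -/
theorem majority_poly_eval_real (ℓ : ℕ) (P : MvPolynomial (Fin ℓ) ℝ)
    (hml : ∀ i : Fin ℓ, P.degreeOf i ≤ 1)
    (hrep : ∀ a : Fin ℓ → Bool,
      MvPolynomial.eval (fun i => if a i then (1 : ℝ) else 0) P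
        = if ℓ < 2 * (Finset.univ.filter fun i => a i = true).card then (1 : ℝ) else 0)
    (a : Fin ℓ → ℝ) (b : Bool)
    (hmaj : ℓ < 2 * (Finset.univ.filter
      fun i => a i = (if b then (1 : ℝ) else 0)).card) :
    MvPolynomial.eval a P = if b then (1 : ℝ) else 0 := by
  classical
  set bv : ℝ := if b then (1:ℝ) else 0 with hbv
  -- general claim by induction on the set of possibly-non-Boolean coordinates
  suffices H : ∀ T : Finset (Fin ℓ), ∀ a : Fin ℓ → ℝ,
      ℓ < 2 * (Finset.univ.filter fun i => a i = bv).card →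
      (∀ i : Fin ℓ, i ∉ T → a i = 0 ∨ a i = 1) →
      MvPolynomial.eval a P = bv by
    exact H Finset.univ a hmaj (fun i hi => absurd (Finset.mem_univ i) hi)
  intro T
  induction T using Finset.induction_on with
  | empty =>
    intro a hmaj hbool
    have hbool' : ∀ i, a i = 0 ∨ a i = 1 := fun i => hbool i (Finset.notMem_empty i)
    set a' : Fin ℓ → Bool := fun i => decide (a i = 1) with ha'
    have haa : a = fun i => if a' i then (1:ℝ) else 0 := by
      funext i
      rcases hbool' i with h0 | h1
      · simp [ha', h0]
      · simp [ha', h1]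
    have hfilter : (Finset.univ.filter fun i => a' i = true)
        = (Finset.univ.filter fun i => a i = 1) := by
      apply Finset.filter_congr
      intro i _
      simp [ha']
    rw [haa, hrep a', hfilter]
    cases b with
    | true =>
      have hmaj1 : ℓ < 2 * (Finset.univ.filter fun i => a i = (1:ℝ)).card := by
        simpa [hbv] using hmaj
      rw [if_pos hmaj1, hbv]; norm_num
    | false =>
      have hmaj0 : ℓ < 2 * (Finset.univ.filter fun i => a i = (0:ℝ)).card := by
        simpa [hbv] using hmaj
      have hdisj : Disjoint (Finset.univ.filter fun i => a i = 1)
          (Finset.univ.filter fun i => a i = (0:ℝ)) := by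
        rw [Finset.disjoint_filter]
        intro i _ h1 h0
        rw [h1] at h0; norm_num at h0
      have hsum : (Finset.univ.filter fun i => a i = 1).card
          + (Finset.univ.filter fun i => a i = (0:ℝ)).card ≤ ℓ := by
        rw [← Finset.card_union_of_disjoint hdisj]
        calc (_ : Finset (Fin ℓ)).card ≤ Finset.univ.card := Finset.card_le_univ _
          _ = ℓ := by simp
      rw [if_neg (by omega), hbv]; norm_num
  | insert j T hj IH =>
    intro a hmaj hbool
    by_cases hja : a j = 0 ∨ a j = 1
    · exact IH a hmaj (fun i hi => by
        by_cases h : i = j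
        · exact h ▸ hja
        · exact hbool i (by simp [h, hi]))
    · push_neg at hja
      have hjnb : a j ≠ bv := by
        rcases b with _ | _ <;> simp [hbv] <;> [exact hja.1; exact hja.2]
      have hmaj' : ∀ t : ℝ, ℓ < 2 * (Finset.univ.filter
          fun i => Function.update a j t i = bv).card := by
        intro t
        refine lt_of_lt_of_le hmaj ?_
        apply Nat.mul_le_mul_left
        apply Finset.card_le_card
        intro i hi
        simp only [Finset.mem_filter, Finset.mem_univ, true_and] at hi ⊢
        have hij : i ≠ j := by rintro rfl; exact hjnb hi
        rw [Function.update_of_ne hij]; exact hi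
      have hboolupd : ∀ t : ℝ, (t = 0 ∨ t = 1) → ∀ i : Fin ℓ, i ∉ T →
          Function.update a j t i = 0 ∨ Function.update a j t i = 1 := by
        intro t ht i hi
        by_cases h : i = j
        · subst h; rw [Function.update_self]; exact ht
        · rw [Function.update_of_ne h]
          exact hbool i (by simp [h, hi])
      have h0 : MvPolynomial.eval (Function.update a j 0) P = bv :=
        IH _ (hmaj' 0) (hboolupd 0 (Or.inl rfl))
      have h1 : MvPolynomial.eval (Function.update a j 1) P = bv :=
        IH _ (hmaj' 1) (hboolupd 1 (Or.inr rfl))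
      have := affine_eval P j (hml j) a (a j)
      rw [Function.update_eq_self, h0, h1] at this
      rw [this]; ring
end

section
/- Let m, r, ℓ, s be positive integers with r ≥ ℓ. If an (m,r,ℓ,s)-design exists, then m ≥ min(r²/(2ℓ), s). -/
lemma union_card_bound {α : Type*} [DecidableEq α] (r ℓ : ℕ)
    (G : Finset (Finset α)) (hsize : ∀ S ∈ G, S.card = r)
    (hinter : ∀ S ∈ G, ∀ T ∈ G, S ≠ T → (S ∩ T).card ≤ ℓ) :
    2 * (G.card * r) ≤ 2 * (G.sup id).card + G.card * (G.card - 1) * ℓ := by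
  induction G using Finset.induction_on with
  | empty => simp
  | @insert a s ha ih =>
    have hsize' : ∀ S ∈ s, S.card = r := fun S hS => hsize S (Finset.mem_insert_of_mem hS)
    have hinter' : ∀ S ∈ s, ∀ T ∈ s, S ≠ T → (S ∩ T).card ≤ ℓ := fun S hS T hT h =>
      hinter S (Finset.mem_insert_of_mem hS) T (Finset.mem_insert_of_mem hT) h
    have IH := ih hsize' hinter'
    have hsup : (insert a s).sup id = a ∪ s.sup id := by
      rw [Finset.sup_insert]; rfl
    have hcu : (a ∪ s.sup id).card + (a ∩ s.sup id).card = a.card + (s.sup id).card :=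
      Finset.card_union_add_card_inter a (s.sup id)
    have hc : (a ∩ s.sup id).card ≤ s.card * ℓ := by
      have hsub : a ∩ s.sup id ⊆ s.biUnion (fun T => a ∩ T) := by
        intro x hx
        rw [Finset.sup_eq_biUnion] at hx
        simp only [Finset.mem_inter, Finset.mem_biUnion, id] at hx ⊢
        obtain ⟨hxa, T, hT, hxT⟩ := hx
        exact ⟨T, hT, hxa, hxT⟩
      calc (a ∩ s.sup id).card ≤ (s.biUnion (fun T => a ∩ T)).card :=
            Finset.card_le_card hsub
        _ ≤ ∑ T ∈ s, (a ∩ T).card := Finset.card_biUnion_le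
        _ ≤ ∑ T ∈ s, ℓ := by
            apply Finset.sum_le_sum
            intro T hT
            exact hinter a (Finset.mem_insert_self a s) T (Finset.mem_insert_of_mem hT)
              (fun h => ha (h ▸ hT))
        _ = s.card * ℓ := by rw [Finset.sum_const, smul_eq_mul]
    have har : a.card = r := hsize a (Finset.mem_insert_self a s)
    rw [Finset.card_insert_of_notMem ha, hsup]
    generalize hn : s.card = n at IH hc ⊢
    have hmul1 : (n + 1) * ((n + 1) - 1) * ℓ = n * (n - 1) * ℓ + 2 * (n * ℓ) := by
      rcases Nat.eq_zero_or_pos n with h0 | hpos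
      · subst h0; ring_nf
      · obtain ⟨t, rfl⟩ : ∃ t, n = t + 1 := ⟨n - 1, by omega⟩
        simp only [Nat.add_sub_cancel]; ring
    have hmul2 : 2 * ((n + 1) * r) = 2 * r + 2 * (n * r) := by ring
    omega

/-- If r ≥ ℓ ≥ 1 and an (m,r,ℓ,s)-design exists, then
m ≥ min(r²/(2ℓ), s). -/
theorem design_lower_bound_min (m r ℓ s : ℕ) (hm : 0 < m) (hs : 0 < s)
    (hℓ : 1 ≤ ℓ) (hrℓ : ℓ ≤ r)
    (F : Finset (Finset (Fin m))) (hcard : F.card = s)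
    (hsize : ∀ S ∈ F, S.card = r)
    (hinter : ∀ S ∈ F, ∀ T ∈ F, S ≠ T → (S ∩ T).card ≤ ℓ) :
    (m : ℝ) ≥ min ((r : ℝ) ^ 2 / (2 * ℓ)) (s : ℝ) := by
  have hr : 1 ≤ r := le_trans hℓ hrℓ
  set q := (r + ℓ - 1) / ℓ with hq
  set k := min s q with hk
  have hks : k ≤ s := min_le_left _ _
  obtain ⟨G, hGF, hGcard⟩ := Finset.exists_subset_card_eq (by omega : k ≤ F.card)
  have hbound := union_card_bound r ℓ G (fun S hS => hsize S (hGF hS))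
    (fun S hS T hT h => hinter S (hGF hS) T (hGF hT) h)
  have hGm : (G.sup id).card ≤ m := by
    calc (G.sup id).card ≤ (Finset.univ : Finset (Fin m)).card := Finset.card_le_univ _
      _ = m := by simp
  have hq1 : 1 ≤ q := by
    rw [hq, Nat.le_div_iff_mul_le (by omega)]
    omega
  have hk1 : 1 ≤ k := le_min hs hq1
  have hkub : k * ℓ ≤ r + ℓ - 1 := by
    have h1 : q * ℓ ≤ r + ℓ - 1 := Nat.div_mul_le_self _ _
    have hkq : k ≤ q := min_le_right _ _
    calc k * ℓ ≤ q * ℓ := Nat.mul_le_mul_right _ hkq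
      _ ≤ r + ℓ - 1 := h1
  obtain ⟨t, hkt⟩ : ∃ t, k = t + 1 := ⟨k - 1, by omega⟩
  have htl : t * ℓ + 1 ≤ r := by
    rw [hkt] at hkub
    have hexp : (t + 1) * ℓ = t * ℓ + ℓ := by ring
    omega
  rw [hkt] at hGcard
  have hA : 2 * ((t + 1) * r) ≤ 2 * m + (t + 1) * t * ℓ := by
    rw [hGcard] at hbound
    simp only [Nat.add_sub_cancel] at hbound
    omega
  have hAr : 2 * (((t : ℝ) + 1) * r) ≤ 2 * m + ((t : ℝ) + 1) * t * ℓ := by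
    exact_mod_cast hA
  have htlr : (t : ℝ) * ℓ + 1 ≤ r := by exact_mod_cast htl
  have hℓr : (1 : ℝ) ≤ ℓ := by exact_mod_cast hℓ
  have hrr : (1 : ℝ) ≤ r := by exact_mod_cast hr
  by_cases hc : s ≤ q
  · have hks' : s = t + 1 := by omega
    have hsm : (s : ℝ) ≤ m := by
      rw [hks']
      push_cast
      nlinarith [hAr, htlr, hℓr, hrr]
    calc (m : ℝ) ≥ (s : ℝ) := hsm
      _ ≥ min ((r : ℝ) ^ 2 / (2 * ℓ)) (s : ℝ) := min_le_right _ _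
  · have hkq : k = q := min_eq_right (le_of_not_ge hc)
    have hrk : r ≤ (t + 1) * ℓ := by
      have h1 : r + ℓ - 1 < q * ℓ + ℓ := Nat.lt_div_mul_add (by omega)
      have h5 : q * ℓ = t * ℓ + ℓ := by rw [← hkq, hkt]; ring
      have h6 : (t + 1) * ℓ = t * ℓ + ℓ := by ring
      omega
    have hrkr : (r : ℝ) ≤ ((t : ℝ) + 1) * ℓ := by exact_mod_cast hrk
    have hmain : (r : ℝ) ^ 2 / (2 * ℓ) ≤ m := by
      rw [div_le_iff₀ (by positivity)]
      nlinarith [hAr, htlr, hℓr, hrr, hrkr]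
    calc (m : ℝ) ≥ (r : ℝ) ^ 2 / (2 * ℓ) := hmain
      _ ≥ min ((r : ℝ) ^ 2 / (2 * ℓ)) (s : ℝ) := min_le_left _ _
end
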